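/- arXiv:1801.02812 — 2 statements merged into one kernel-verified Lean document; each statement's English description precedes it below -/
import Mathlib

section
/- The Gromov–Hausdorff distance between finite metric spaces M and N equals the Gromov–Hausdorff distance between their Vietoris–Rips filtered simplicial complexes: d_GH(M,N) = d_GH(VR(M), VR(N)). -/
open Finset Function

noncomputable section
open scoped Classical

variable {V W U : Type} [Fintype V] [Fintype W] [Fintype U]

/-- A size function is monotone on nonempty subsets. -/
def Monot (D : Finset V → ℝ) : Prop :=
  ∀ ⦃α β : Finset V⦄, α.Nonempty → α ⊆ β → D α ≤ D β

/-- `max 0 (sup over nonempty subsets of the vertex set of g)`. -/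
def supSub (g : Finset V → ℝ) : ℝ :=
  ((Finset.univ : Finset V).powerset.filter Finset.Nonempty).fold max 0 g

/-- Degree of a morphism: least `r ≥ 0` with `D_Y (f α) ≤ D_X α + r` for all nonempty `α`. -/
def degF (DX : Finset V → ℝ) (DY : Finset W → ℝ) (f : V → W) : ℝ :=
  supSub fun α => DY (α.image f) - DX α

/-- Codegree: least `r ≥ 0` with `D_Y (f α ∪ g α) ≤ D_X α + r` for all nonempty `α`. -/
def codegF (DX : Finset V → ℝ) (DY : Finset W → ℝ) (f g : V → W) : ℝ :=
  supSub fun α => DY (α.image f ∪ α.image g) - DX α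

/-- `codeg^∞`: minimum over chains `f = F 0, …, F n = g` of the max codegree of
consecutive terms. -/
def codegInfF (DX : Finset V → ℝ) (DY : Finset W → ℝ) (f g : V → W) : ℝ :=
  sInf { c : ℝ | ∃ n : ℕ, 0 < n ∧ ∃ F : ℕ → V → W, F 0 = f ∧ F n = g ∧
    c = (Finset.range n).fold max 0 fun i => codegF DX DY (F i) (F (i + 1)) }

/-- `(f, g)` is an `ε`-interleaving between the filtered complexes given by `DX`, `DY`. -/
def IsInterleaving (DX : Finset V → ℝ) (DY : Finset W → ℝ)
    (f : V → W) (g : W → V) (ε : ℝ) : Prop :=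
  degF DX DY f ≤ ε ∧ degF DY DX g ≤ ε ∧
  codegInfF DX DX (g ∘ f) id ≤ 2 * ε ∧ codegInfF DY DY (f ∘ g) id ≤ 2 * ε

/-- The interleaving distance between filtered simplicial complexes. -/
def dIF (DX : Finset V → ℝ) (DY : Finset W → ℝ) : ℝ :=
  sInf { ε : ℝ | 0 ≤ ε ∧ ∃ f g, IsInterleaving DX DY f g ε }

/-- The vertex quasi-distance `δ_X(v,w)`. -/
def vqd (D : Finset V → ℝ) (v w : V) : ℝ :=
  supSub fun α => D (insert w α) - D (insert v α)

/-- Distortion of a correspondence `R ⊆ V × W`, viewed as a tripod via the projections. -/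
def corDis (DX : Finset V → ℝ) (DY : Finset W → ℝ) (R : Finset (V × W)) : ℝ :=
  (R.powerset.filter Finset.Nonempty).fold max 0 fun α =>
    |DX (α.image Prod.fst) - DY (α.image Prod.snd)|

/-- Gromov–Hausdorff distance (via correspondences). -/
def dGHcor (DX : Finset V → ℝ) (DY : Finset W → ℝ) : ℝ :=
  (1 / 2) * sInf { c : ℝ | ∃ R : Finset (V × W),
    (∀ v : V, ∃ w, (v, w) ∈ R) ∧ (∀ w : W, ∃ v, (v, w) ∈ R) ∧ c = corDis DX DY R }

/-- Distortion of a tripod `(Z, p, q)`. -/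
def trdis (DX : Finset V → ℝ) (DY : Finset W → ℝ) {Z : Type} [Fintype Z]
    (p : Z → V) (q : Z → W) : ℝ :=
  supSub fun α : Finset Z => |DX (α.image p) - DY (α.image q)|

/-- Gromov–Hausdorff distance between filtered simplicial complexes (via tripods). -/
def dGHtri (DX : Finset V → ℝ) (DY : Finset W → ℝ) : ℝ :=
  (1 / 2) * sInf { c : ℝ | ∃ (Z : Type) (_i : Fintype Z) (p : Z → V) (q : Z → W),
    Surjective p ∧ Surjective q ∧ c = trdis DX DY p q }

/-- Diameter of a finite subset of a metric space. -/
def fdiam {M : Type} [MetricSpace M] (σ : Finset M) : ℝ :=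
  (σ ×ˢ σ).fold max 0 fun p => dist p.1 p.2

/-- Metric distortion of a correspondence between metric spaces. -/
def metDis {M N : Type} [MetricSpace M] [MetricSpace N] (R : Finset (M × N)) : ℝ :=
  (R ×ˢ R).fold max 0 fun p => |dist p.1.1 p.2.1 - dist p.1.2 p.2.2|

/-- Gromov–Hausdorff distance between finite metric spaces. -/
def dGHmet (M N : Type) [MetricSpace M] [MetricSpace N] : ℝ :=
  (1 / 2) * sInf { c : ℝ | ∃ R : Finset (M × N),
    (∀ x : M, ∃ y, (x, y) ∈ R) ∧ (∀ y : N, ∃ x, (x, y) ∈ R) ∧ c = metDis R }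

lemma fold_max_nonneg {α : Type*} (s : Finset α) (f : α → ℝ) : 0 ≤ s.fold max 0 f :=
  (Finset.le_fold_max _).mpr (Or.inl le_rfl)

lemma fdiam_nonneg {M : Type} [MetricSpace M] (σ : Finset M) : 0 ≤ fdiam σ :=
  fold_max_nonneg _ _

lemma metDis_nonneg {M N : Type} [MetricSpace M] [MetricSpace N] (R : Finset (M × N)) :
    0 ≤ metDis R :=
  fold_max_nonneg _ _

lemma le_fdiam {M : Type} [MetricSpace M] {σ : Finset M} {x y : M} (hx : x ∈ σ)
    (hy : y ∈ σ) : dist x y ≤ fdiam σ :=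
  (Finset.le_fold_max _).mpr (Or.inr ⟨(x, y), Finset.mem_product.mpr ⟨hx, hy⟩, le_rfl⟩)

lemma fdiam_pair {M : Type} [MetricSpace M] (a b : M) :
    fdiam ({a, b} : Finset M) = dist a b := by
  refine le_antisymm ((Finset.fold_max_le _).mpr ⟨dist_nonneg, ?_⟩)
    (le_fdiam (by simp) (by simp))
  rintro ⟨x, y⟩ hxy
  rw [Finset.mem_product] at hxy
  obtain ⟨hx, hy⟩ := hxy
  simp only [Finset.mem_insert, Finset.mem_singleton] at hx hy
  rcases hx with rfl | rfl <;> rcases hy with rfl | rfl <;>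
    simp [dist_comm, dist_nonneg]

lemma le_metDis {M N Z : Type} [MetricSpace M] [MetricSpace N] [Fintype Z]
    (p : Z → M) (q : Z → N) (z z' : Z) :
    |dist (p z) (p z') - dist (q z) (q z')|
      ≤ metDis (Finset.univ.image fun z => (p z, q z)) := by
  refine (Finset.le_fold_max _).mpr (Or.inr ⟨((p z, q z), (p z', q z')),
    Finset.mem_product.mpr ⟨?_, ?_⟩, le_rfl⟩) <;>
  · exact Finset.mem_image.mpr ⟨_, Finset.mem_univ _, rfl⟩

lemma fdiam_image_le {M N Z : Type} [MetricSpace M] [MetricSpace N] [Fintype Z]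
    (p : Z → M) (q : Z → N) (α : Finset Z) :
    fdiam (α.image p) ≤ fdiam (α.image q)
      + metDis (Finset.univ.image fun z => (p z, q z)) := by
  refine (Finset.fold_max_le _).mpr ⟨add_nonneg (fdiam_nonneg _) (metDis_nonneg _), ?_⟩
  rintro ⟨x, y⟩ hxy
  rw [Finset.mem_product] at hxy
  obtain ⟨z, hz, rfl⟩ := Finset.mem_image.mp hxy.1
  obtain ⟨z', hz', rfl⟩ := Finset.mem_image.mp hxy.2
  have h1 : dist (p z) (p z') ≤ dist (q z) (q z')
      + |dist (p z) (p z') - dist (q z) (q z')| := by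
    have := le_abs_self (dist (p z) (p z') - dist (q z) (q z'))
    linarith
  refine h1.trans (add_le_add ?_ (le_metDis p q z z'))
  exact le_fdiam (Finset.mem_image.mpr ⟨z, hz, rfl⟩) (Finset.mem_image.mpr ⟨z', hz', rfl⟩)

lemma fdiam_image_le' {M N Z : Type} [MetricSpace M] [MetricSpace N] [Fintype Z]
    (p : Z → M) (q : Z → N) (α : Finset Z) :
    fdiam (α.image q) ≤ fdiam (α.image p)
      + metDis (Finset.univ.image fun z => (p z, q z)) := by
  refine (Finset.fold_max_le _).mpr ⟨add_nonneg (fdiam_nonneg _) (metDis_nonneg _), ?_⟩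
  rintro ⟨x, y⟩ hxy
  rw [Finset.mem_product] at hxy
  obtain ⟨z, hz, rfl⟩ := Finset.mem_image.mp hxy.1
  obtain ⟨z', hz', rfl⟩ := Finset.mem_image.mp hxy.2
  have h1 : dist (q z) (q z') ≤ dist (p z) (p z')
      + |dist (p z) (p z') - dist (q z) (q z')| := by
    have := neg_abs_le (dist (p z) (p z') - dist (q z) (q z'))
    linarith
  refine h1.trans (add_le_add ?_ (le_metDis p q z z'))
  exact le_fdiam (Finset.mem_image.mpr ⟨z, hz, rfl⟩) (Finset.mem_image.mpr ⟨z', hz', rfl⟩)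

/-- The key lemma: the tripod distortion of the VR filtrations equals the metric
distortion of the induced correspondence. -/
lemma trdis_eq_metDis {M N Z : Type} [MetricSpace M] [MetricSpace N] [Fintype Z]
    (p : Z → M) (q : Z → N) :
    trdis (fdiam (M := M)) (fdiam (M := N)) p q
      = metDis (Finset.univ.image fun z => (p z, q z)) := by
  refine le_antisymm ?_ ?_
  · refine (Finset.fold_max_le _).mpr ⟨metDis_nonneg _, ?_⟩
    intro α _
    rw [abs_sub_le_iff]
    constructor
    · have := fdiam_image_le p q α
      linarith
    · have := fdiam_image_le' p q α
      linarith
  · refine (Finset.fold_max_le _).mpr ⟨fold_max_nonneg _ _, ?_⟩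
    rintro ⟨x, y⟩ hxy
    rw [Finset.mem_product] at hxy
    obtain ⟨z, -, rfl⟩ := Finset.mem_image.mp hxy.1
    obtain ⟨z', -, rfl⟩ := Finset.mem_image.mp hxy.2
    have hmem : ({z, z'} : Finset Z)
        ∈ (Finset.univ : Finset Z).powerset.filter Finset.Nonempty := by
      simp [Finset.insert_nonempty]
    refine (Finset.le_fold_max _).mpr (Or.inr ⟨{z, z'}, hmem, ?_⟩)
    simp only [Finset.image_insert, Finset.image_singleton, fdiam_pair]
    exact le_rfl

/-- `d_GH(M,N) = d_GH(VR(M), VR(N))`. -/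
theorem stmt_2 (M N : Type) [MetricSpace M] [MetricSpace N] [Fintype M] [Fintype N]
    [Nonempty M] [Nonempty N] :
    dGHmet M N = dGHtri (fdiam (M := M)) (fdiam (M := N)) := by
  unfold dGHmet dGHtri
  congr 2
  ext c
  constructor
  · rintro ⟨R, h1, h2, rfl⟩
    refine ⟨{x : M × N // x ∈ R}, inferInstance, fun z => z.val.1, fun z => z.val.2,
      ?_, ?_, ?_⟩
    · intro x
      obtain ⟨y, hy⟩ := h1 x
      exact ⟨⟨(x, y), hy⟩, rfl⟩
    · intro y
      obtain ⟨x, hx⟩ := h2 y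
      exact ⟨⟨(x, y), hx⟩, rfl⟩
    · rw [trdis_eq_metDis]
      congr 1
      have : (fun z : {x : M × N // x ∈ R} => (z.val.1, z.val.2))
          = fun z => z.val := by
        funext z; exact rfl
      rw [this, Finset.univ_eq_attach, Finset.attach_image_val]
  · rintro ⟨Z, iZ, p, q, hp, hq, rfl⟩
    refine ⟨Finset.univ.image fun z => (p z, q z), ?_, ?_, ?_⟩
    · intro x
      obtain ⟨z, rfl⟩ := hp x
      exact ⟨q z, Finset.mem_image.mpr ⟨z, Finset.mem_univ _, rfl⟩⟩
    · intro y
      obtain ⟨z, rfl⟩ := hq y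
      exact ⟨p z, Finset.mem_image.mpr ⟨z, Finset.mem_univ _, rfl⟩⟩
    · exact trdis_eq_metDis p q
end
end

section
/- The Gromov–Hausdorff distance between filtered simplicial complexes satisfies the triangle inequality: for filtered complexes X^*, X'^*, X''^* on finite vertex sets, d_GH(X^*, X''^*) ≤ d_GH(X^*, X'^*) + d_GH(X'^*, X''^*). -/
open Finset Function

noncomputable section
open scoped Classical

variable {V W U : Type} [Fintype V] [Fintype W] [Fintype U]

lemma supSub_nonneg (g : Finset V → ℝ) : 0 ≤ supSub g :=
  (Finset.le_fold_max _).mpr (Or.inl le_rfl)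

lemma le_supSub (g : Finset V → ℝ) {α : Finset V} (h : α.Nonempty) : g α ≤ supSub g :=
  (Finset.le_fold_max _).mpr (Or.inr ⟨α, by
    simp [Finset.mem_filter, Finset.mem_powerset, h, Finset.subset_univ], le_rfl⟩)

lemma supSub_le {g : Finset V → ℝ} {B : ℝ} (h0 : 0 ≤ B)
    (h : ∀ α : Finset V, α.Nonempty → g α ≤ B) : supSub g ≤ B :=
  (Finset.fold_max_le _).mpr ⟨h0, fun α hα => h α (Finset.mem_filter.mp hα).2⟩

set_option linter.unusedSectionVars false in
lemma trdis_nonneg (DX : Finset V → ℝ) (DY : Finset W → ℝ) {Z : Type} [Fintype Z]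
    (p : Z → V) (q : Z → W) : 0 ≤ trdis DX DY p q :=
  supSub_nonneg _

set_option linter.unusedSectionVars false in
lemma le_trdis (DX : Finset V → ℝ) (DY : Finset W → ℝ) {Z : Type} [Fintype Z]
    (p : Z → V) (q : Z → W) {α : Finset Z} (h : α.Nonempty) :
    |DX (α.image p) - DY (α.image q)| ≤ trdis DX DY p q :=
  le_supSub (fun α : Finset Z => |DX (α.image p) - DY (α.image q)|) h

lemma tri_key (DX : Finset V → ℝ) (DX' : Finset W → ℝ) (DX'' : Finset U → ℝ)
    {Z1 Z2 : Type} [Fintype Z1] [Fintype Z2]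
    (p1 : Z1 → V) (q1 : Z1 → W) (p2 : Z2 → W) (q2 : Z2 → U)
    (hp1 : Surjective p1) (hq1 : Surjective q1) (hp2 : Surjective p2) (hq2 : Surjective q2) :
    ∃ (Z : Type) (_i : Fintype Z) (p : Z → V) (q : Z → U),
      Surjective p ∧ Surjective q ∧
      trdis DX DX'' p q ≤ trdis DX DX' p1 q1 + trdis DX' DX'' p2 q2 := by
  classical
  refine ⟨{z : Z1 × Z2 // q1 z.1 = p2 z.2}, inferInstance,
    fun z => p1 z.1.1, fun z => q2 z.1.2, ?_, ?_, ?_⟩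
  · intro v
    obtain ⟨z1, hz1⟩ := hp1 v
    obtain ⟨z2, hz2⟩ := hp2 (q1 z1)
    exact ⟨⟨(z1, z2), hz2.symm⟩, hz1⟩
  · intro u
    obtain ⟨z2, hz2⟩ := hq2 u
    obtain ⟨z1, hz1⟩ := hq1 (p2 z2)
    exact ⟨⟨(z1, z2), hz1⟩, hz2⟩
  · apply supSub_le (add_nonneg (trdis_nonneg _ _ _ _) (trdis_nonneg _ _ _ _))
    intro α hα
    set β : Finset Z1 := α.image (fun z => z.1.1) with hβ
    set γ : Finset Z2 := α.image (fun z => z.1.2) with hγ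
    have hβne : β.Nonempty := hα.image _
    have hγne : γ.Nonempty := hα.image _
    have h1 : β.image p1 = α.image (fun z => p1 z.1.1) := by
      rw [hβ, Finset.image_image]; rfl
    have h2 : γ.image q2 = α.image (fun z => q2 z.1.2) := by
      rw [hγ, Finset.image_image]; rfl
    have hmid : β.image q1 = γ.image p2 := by
      rw [hβ, hγ, Finset.image_image, Finset.image_image]
      exact Finset.image_congr fun z _ => z.2
    calc |DX (α.image fun z => p1 z.1.1) - DX'' (α.image fun z => q2 z.1.2)|
        ≤ |DX (β.image p1) - DX' (β.image q1)| + |DX' (γ.image p2) - DX'' (γ.image q2)| := by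
          rw [h1, h2, hmid]; exact abs_sub_le _ _ _
      _ ≤ trdis DX DX' p1 q1 + trdis DX' DX'' p2 q2 :=
          add_le_add (le_trdis DX DX' p1 q1 hβne) (le_trdis DX' DX'' p2 q2 hγne)

lemma sInf_triangle {S13 S12 S23 : Set ℝ} (h12 : S12.Nonempty) (h23 : S23.Nonempty)
    (key : ∀ c1 ∈ S12, ∀ c2 ∈ S23, sInf S13 ≤ c1 + c2) :
    sInf S13 ≤ sInf S12 + sInf S23 := by
  rw [← sub_le_iff_le_add']
  apply le_csInf h23
  intro c2 hc2
  rw [sub_le_iff_le_add, add_comm, ← sub_le_iff_le_add]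
  apply le_csInf h12
  intro c1 hc1
  rw [sub_le_iff_le_add]
  exact key c1 hc1 c2 hc2


/-- triangle inequality for the Gromov–Hausdorff distance between
filtered simplicial complexes. -/
theorem stmt_3 [Nonempty V] [Nonempty W] [Nonempty U]
    (DX : Finset V → ℝ) (DX' : Finset W → ℝ) (DX'' : Finset U → ℝ)
    (hX : Monot DX) (hX' : Monot DX') (hX'' : Monot DX'') :
    dGHtri DX DX'' ≤ dGHtri DX DX' + dGHtri DX' DX'' := by
  classical
  unfold dGHtri
  rw [← mul_add]
  apply mul_le_mul_of_nonneg_left _ (by norm_num : (0:ℝ) ≤ 1/2)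
  have hbdd : BddBelow { c : ℝ | ∃ (Z : Type) (_i : Fintype Z) (p : Z → V) (q : Z → U),
      Surjective p ∧ Surjective q ∧ c = trdis DX DX'' p q } := by
    refine ⟨0, fun c hc => ?_⟩
    obtain ⟨Z, _i, p, q, _, _, rfl⟩ := hc
    exact trdis_nonneg _ _ _ _
  apply sInf_triangle
  · exact ⟨trdis DX DX' Prod.fst Prod.snd, V × W, inferInstance, Prod.fst, Prod.snd,
      Prod.fst_surjective, Prod.snd_surjective, rfl⟩
  · exact ⟨trdis DX' DX'' Prod.fst Prod.snd, W × U, inferInstance, Prod.fst, Prod.snd,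
      Prod.fst_surjective, Prod.snd_surjective, rfl⟩
  · rintro c1 ⟨Z1, _i1, p1, q1, hp1, hq1, rfl⟩ c2 ⟨Z2, _i2, p2, q2, hp2, hq2, rfl⟩
    obtain ⟨Z, _i, p, q, hp, hq, hle⟩ :=
      tri_key DX DX' DX'' p1 q1 p2 q2 hp1 hq1 hp2 hq2
    exact le_trans (csInf_le hbdd ⟨Z, _i, p, q, hp, hq, rfl⟩) hle
end
end
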